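/- Let f be a meromorphic function on ℂ such that there exist complex numbers c_n, an increasing sequence of reals q_n with q_1 > 1, and σ ∈ ℝ with log f(w) = Σ_{n=1}^∞ c_n q_n^{−w} converging absolutely and uniformly on every half-plane Re(w) ≥ σ + ε. Fix z ∈ X_f = {z ∈ ℂ : z − ρ ∉ (−∞,0] for all zeros and poles ρ of f}. Then the integral I(s,z) = ∫₀^∞ (f'/f)(z+y) y^{−s} dy converges absolutely for every s in the half-plane Re(s) < 1 and defines a holomorphic function of s there. -/

import Mathlib

open Complex Filter MeasureTheory
open scoped Topology

section Aux

/-- A set of reals all of whose points are isolated is countable. -/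
lemma zetaTypeAux_countable_of_isolated {D : Set ℝ}
    (h : ∀ t ∈ D, ∃ ε > 0, ∀ t' ∈ D, |t' - t| < ε → t' = t) : D.Countable := by
  choose! ε hε0 hεD using h
  have hd : D.PairwiseDisjoint (fun t => Metric.ball t (ε t / 2)) := by
    intro a ha b hb hab
    apply Metric.ball_disjoint_ball
    have h1 : ε a ≤ |b - a| := le_of_not_gt fun hlt => hab (hεD a ha b hb hlt).symm
    have h2 : ε b ≤ |a - b| := le_of_not_gt fun hlt => hab (hεD b hb a ha hlt)
    rw [abs_sub_comm] at h1
    rw [Real.dist_eq]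
    nlinarith [abs_nonneg (a - b)]
  exact hd.countable_of_isOpen (fun i _ => Metric.isOpen_ball)
    (fun i hi => Metric.nonempty_ball.2 (by linarith [hε0 i hi]))

/-- The derivative of a function analytic at a point is continuous at that point. -/
lemma zetaTypeAux_continuousAt_deriv {f : ℂ → ℂ} {x : ℂ} (h : AnalyticAt ℂ f x) :
    ContinuousAt (deriv f) x := by
  obtain ⟨U, h1, h2, h3⟩ := eventually_nhds_iff.mp h.eventually_analyticAt
  have hA : AnalyticOnNhd ℂ f U := fun y hy => h1 y hy
  exact (hA.deriv.continuousOn).continuousAt (h2.mem_nhds h3)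

end Aux

/-- Let `f` be meromorphic on `ℂ` with `log f` given by an absolutely
and uniformly convergent generalized Dirichlet series on half-planes `Re w ≥ σ + ε`, and
fix `z ∈ X_f` (so `z - ρ ∉ (-∞,0]` for every zero or pole `ρ` of `f`).  Then the
integral `I(s,z) = ∫₀^∞ (f'/f)(z+y) y^{-s} dy` converges absolutely for every `s` with
`Re s < 1`, and defines a holomorphic function of `s` on that half-plane. -/
theorem zetaType_integral_holomorphic_left_halfplane
    (f : ℂ → ℂ) (hf : MeromorphicOn f Set.univ)
    (c : ℕ → ℂ) (q : ℕ → ℝ) (hq₁ : 1 < q 0) (hq : StrictMono q) (σ : ℝ)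
    (hconv : ∀ ε : ℝ, 0 < ε → Summable (fun n : ℕ => ‖c n‖ * q n ^ (-(σ + ε))))
    (hrep : ∀ w : ℂ, σ < w.re →
      f w = Complex.exp (∑' n : ℕ, c n * (q n : ℂ) ^ (-w)))
    (z : ℂ)
    (hz : ∀ ρ : ℂ, meromorphicOrderAt f ρ ≠ 0 →
      ¬((z - ρ).im = 0 ∧ (z - ρ).re ≤ 0)) :
    (∀ s : ℂ, s.re < 1 →
      IntegrableOn (fun t : ℝ => logDeriv f (z + t) * (t : ℂ) ^ (-s)) (Set.Ioi 0)) ∧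
    DifferentiableOn ℂ
      (fun s : ℂ => ∫ t in Set.Ioi (0 : ℝ), logDeriv f (z + t) * (t : ℂ) ^ (-s))
      {s : ℂ | s.re < 1} := by
  set F : ℝ → ℂ := fun t => logDeriv f (z + t) with hFdef
  have hq1n : ∀ n, 1 < q n := fun n => lt_of_lt_of_le hq₁ (hq.monotone (Nat.zero_le n))
  have hqpos : ∀ n, (0:ℝ) < q n := fun n => lt_trans one_pos (hq1n n)
  set L : ℕ → ℝ := fun n => Real.log (q n) with hLdef
  have hlogpos : ∀ n, (0:ℝ) < L n := fun n => Real.log_pos (hq1n n)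
  set a : ℝ := Real.log (q 0) with hadef
  have ha : 0 < a := Real.log_pos hq₁
  -- Step 0: along the ray, f agrees with a nonvanishing analytic function off the center
  have hord : ∀ t : ℝ, 0 ≤ t → ∃ g : ℂ → ℂ, AnalyticAt ℂ g (z + t) ∧ g (z + t) ≠ 0 ∧
      ∀ᶠ w in 𝓝[≠] (z + (t:ℂ)), f w = g w := by
    intro t ht
    have h0 : meromorphicOrderAt f (z + t) = ((0:ℤ) : WithTop ℤ) := by
      by_contra h
      refine hz (z + t) (by exact_mod_cast h) ⟨by simp, ?_⟩
      simp only [Complex.sub_re, Complex.add_re, Complex.ofReal_re]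
      linarith
    rw [meromorphicOrderAt_eq_int_iff (hf (z + t) (Set.mem_univ _))] at h0
    obtain ⟨g, hg1, hg2, hg3⟩ := h0
    exact ⟨g, hg1, hg2, hg3.mono fun w hw => by simpa using hw⟩
  -- Step 1: local structure and boundedness along the ray
  have hloc : ∀ t₀ : ℝ, 0 ≤ t₀ → ∃ ε > (0:ℝ), ∃ C : ℝ,
      (∀ t : ℝ, |t - t₀| < ε → t ≠ t₀ → AnalyticAt ℂ f (z + t) ∧ f (z + t) ≠ 0) ∧
      (∀ t : ℝ, |t - t₀| < ε → ‖F t‖ ≤ C) := by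
    intro t₀ ht₀
    obtain ⟨g, hg_an, hg_ne, hg_eq₀⟩ := hord t₀ ht₀
    set x : ℂ := z + t₀ with hxdef
    have hg_eq : f =ᶠ[𝓝[≠] x] g := hg_eq₀
    have hgc : ContinuousAt (logDeriv g) x := by
      have h1 : ContinuousAt (deriv g) x := zetaTypeAux_continuousAt_deriv hg_an
      exact h1.div hg_an.continuousAt hg_ne
    set C : ℝ := ‖logDeriv g x‖ + 1 with hCdef
    have hC0 : 0 ≤ C := by positivity
    have hev : ∀ᶠ w in 𝓝 x, (w ≠ x → f w = g w) ∧ AnalyticAt ℂ g w ∧ g w ≠ 0 ∧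
        ‖logDeriv g w‖ ≤ C := by
      have e1 : ∀ᶠ w in 𝓝 x, w ≠ x → f w = g w := by
        have := eventually_nhdsWithin_iff.mp hg_eq
        exact this.mono fun w hw hne => hw (by simpa using hne)
      have e2 : ∀ᶠ w in 𝓝 x, AnalyticAt ℂ g w := hg_an.eventually_analyticAt
      have e3 : ∀ᶠ w in 𝓝 x, g w ≠ 0 := hg_an.continuousAt.eventually_ne hg_ne
      have e4 : ∀ᶠ w in 𝓝 x, ‖logDeriv g w‖ ≤ C :=
        (hgc.norm.eventually_lt_const (lt_add_one _)).mono fun w hw => hw.le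
      filter_upwards [e1, e2, e3, e4] with w w1 w2 w3 w4 using ⟨w1, w2, w3, w4⟩
    obtain ⟨U, hU1, hU2, hU3⟩ := eventually_nhds_iff.mp hev
    obtain ⟨ε, hε, hball⟩ := Metric.isOpen_iff.mp hU2 x hU3
    have hdist : ∀ t : ℝ, dist ((z + t : ℂ)) x = |t - t₀| := by
      intro t
      rw [hxdef, dist_add_left, Complex.dist_eq, ← Complex.ofReal_sub, Complex.norm_real, Real.norm_eq_abs]
    have hmem : ∀ t : ℝ, |t - t₀| < ε → ((z + t : ℂ)) ∈ U := by
      intro t h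
      exact hball (by rw [Metric.mem_ball, hdist]; exact h)
    refine ⟨ε, hε, C, ?_, ?_⟩
    · intro t hlt hne
      have hwne : (z + (t:ℂ)) ≠ x := by
        rw [hxdef]
        intro h
        exact hne (Complex.ofReal_injective (add_left_cancel h))
      have hfeq : f =ᶠ[𝓝 (z + (t:ℂ))] g := by
        apply eventually_nhds_iff.mpr
        refine ⟨U ∩ {x}ᶜ, fun y hy => (hU1 y hy.1).1 hy.2, hU2.inter (isOpen_compl_singleton),
          ⟨hmem t hlt, hwne⟩⟩
      have hgw := hU1 _ (hmem t hlt)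
      refine ⟨hgw.2.1.congr hfeq.symm, ?_⟩
      rw [hfeq.self_of_nhds]
      exact hgw.2.2.1
    · intro t hlt
      by_cases hne : t = t₀
      · subst hne
        by_cases hdiff : DifferentiableAt ℂ f x
        · have l1 : Filter.Tendsto f (𝓝[≠] x) (𝓝 (f x)) :=
            hdiff.continuousAt.mono_left nhdsWithin_le_nhds
          have l2 : Filter.Tendsto f (𝓝[≠] x) (𝓝 (g x)) :=
            Filter.Tendsto.congr' hg_eq.symm (hg_an.continuousAt.mono_left nhdsWithin_le_nhds)
          have hfx : f x = g x := tendsto_nhds_unique l1 l2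
          have hfeq : f =ᶠ[𝓝 x] g := by
            have h5 := eventually_nhdsWithin_iff.mp hg_eq
            filter_upwards [h5] with w hw
            by_cases hwx : w = x
            · subst hwx; exact hfx
            · exact hw (by simpa using hwx)
          have : logDeriv f x = logDeriv g x := by
            rw [logDeriv_apply, logDeriv_apply, hfeq.deriv_eq, hfeq.self_of_nhds]
          show ‖logDeriv f (z + (t:ℂ))‖ ≤ C
          rw [← hxdef, this]
          simp [hCdef]
        · show ‖logDeriv f (z + (t:ℂ))‖ ≤ C
          rw [← hxdef, logDeriv_eq_zero_of_not_differentiableAt f x hdiff]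
          simpa using hC0
      · have hwne : (z + (t:ℂ)) ≠ x := by
          rw [hxdef]
          intro h
          exact hne (Complex.ofReal_injective (add_left_cancel h))
        have hfeq : f =ᶠ[𝓝 (z + (t:ℂ))] g := by
          apply eventually_nhds_iff.mpr
          refine ⟨U ∩ {x}ᶜ, fun y hy => (hU1 y hy.1).1 hy.2, hU2.inter (isOpen_compl_singleton),
            ⟨hmem t hlt, hwne⟩⟩
        have : logDeriv f (z + (t:ℂ)) = logDeriv g (z + (t:ℂ)) := by
          rw [logDeriv_apply, logDeriv_apply, hfeq.deriv_eq, hfeq.self_of_nhds]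
        show ‖logDeriv f (z + (t:ℂ))‖ ≤ C
        rw [this]
        exact (hU1 _ (hmem t hlt)).2.2.2
  -- Step 2: the good set V
  set V : Set ℝ := {t : ℝ | 0 < t ∧ AnalyticAt ℂ f (z + t) ∧ f (z + t) ≠ 0} with hVdef
  have hVopen : IsOpen V := by
    rw [isOpen_iff_mem_nhds]
    rintro t ⟨ht0, htA, htne⟩
    have h1 : ∀ᶠ w in 𝓝 (z + (t:ℂ)), AnalyticAt ℂ f w := htA.eventually_analyticAt
    have h2 : ∀ᶠ w in 𝓝 (z + (t:ℂ)), f w ≠ 0 := htA.continuousAt.eventually_ne htne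
    have hcont : Filter.Tendsto (fun s : ℝ => z + (s:ℂ)) (𝓝 t) (𝓝 (z + (t:ℂ))) := by
      apply Continuous.tendsto
      fun_prop
    have h3 := hcont.eventually (h1.and h2)
    have h4 : ∀ᶠ s in 𝓝 t, (0:ℝ) < s := eventually_gt_nhds ht0
    filter_upwards [h3, h4] with s hs1 hs2 using ⟨hs2, hs1.1, hs1.2⟩
  have hFcont : ContinuousOn F V := by
    rintro t ⟨ht0, htA, htne⟩
    apply ContinuousAt.continuousWithinAt
    have h1 : ContinuousAt (logDeriv f) (z + (t:ℂ)) :=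
      (zetaTypeAux_continuousAt_deriv htA).div htA.continuousAt htne
    have h2 : ContinuousAt (fun s : ℝ => z + (s:ℂ)) t :=
      (continuous_const.add Complex.continuous_ofReal).continuousAt
    exact ContinuousAt.comp (f := fun s : ℝ => z + (s:ℂ)) (x := t) h1 h2
  have hVsub : V ⊆ Set.Ioi (0:ℝ) := fun t ht => ht.1
  have hD : (Set.Ioi (0:ℝ) \ V).Countable := by
    apply zetaTypeAux_countable_of_isolated
    rintro t ⟨ht0, -⟩
    obtain ⟨ε, hε, C, hAn, -⟩ := hloc t (le_of_lt ht0)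
    refine ⟨ε, hε, fun t' ht' hlt => ?_⟩
    by_contra hne
    exact ht'.2 ⟨ht'.1, (hAn t' hlt hne).1, (hAn t' hlt hne).2⟩
  have hnull : volume (Set.Ioi (0:ℝ) \ V) = 0 := hD.measure_zero _
  have hmeas : AEStronglyMeasurable F (volume.restrict (Set.Ioi (0:ℝ))) := by
    have hre : volume.restrict (Set.Ioi (0:ℝ)) = volume.restrict V := by
      apply Measure.restrict_congr_set
      rw [MeasureTheory.ae_eq_set]
      exact ⟨hnull, by rw [Set.diff_eq_empty.mpr hVsub]; simp⟩
    rw [hre]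
    exact hFcont.aestronglyMeasurable hVopen.measurableSet
  have hfc : LocallyIntegrableOn F (Set.Ioi (0:ℝ)) := by
    intro x hx
    obtain ⟨ε, hε, C, -, hC⟩ := hloc x (le_of_lt hx)
    refine ⟨Set.Ioi 0 ∩ Metric.ball x ε,
      inter_mem_nhdsWithin _ (Metric.ball_mem_nhds x hε), ?_⟩
    have hmeasS : MeasurableSet (Set.Ioi (0:ℝ) ∩ Metric.ball x ε) :=
      measurableSet_Ioi.inter measurableSet_ball
    refine Integrable.mono' (g := fun _ => C) ?_ ?_ ?_
    · exact integrableOn_const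
        (((measure_mono Set.inter_subset_right).trans_lt measure_ball_lt_top).ne)
    · exact hmeas.mono_measure (Measure.restrict_mono Set.inter_subset_left le_rfl)
    · rw [ae_restrict_iff' hmeasS]
      exact ae_of_all _ fun t ht => hC t (by simpa [Real.dist_eq] using Metric.mem_ball.mp ht.2)
  have hf_bot : F =O[𝓝[>] (0:ℝ)] (fun t : ℝ => t ^ (-(0:ℝ))) := by
    obtain ⟨ε, hε, C, -, hC⟩ := hloc 0 le_rfl
    rw [Asymptotics.isBigO_iff]
    refine ⟨C, ?_⟩
    filter_upwards [Ioo_mem_nhdsGT_of_mem (Set.mem_Ico.mpr ⟨le_rfl, hε⟩)] with t ht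
    have : ‖F t‖ ≤ C := hC t (by rw [sub_zero, abs_of_pos ht.1]; exact ht.2)
    simpa using this
  -- Step 5: the Dirichlet series, its derivative, and exponential decay
  set τ : ℝ := σ + 2 with hτdef
  set g : ℂ → ℂ := fun w => ∑' n, c n * Complex.exp (-w * (L n : ℂ)) with hgdef
  set d : ℕ → ℂ → ℂ := fun n w => c n * (Complex.exp (-w * (L n : ℂ)) * -(L n : ℂ)) with hddef
  set G : ℂ → ℂ := fun w => ∑' n, d n w with hGdef
  set u : ℕ → ℝ := fun n => ‖c n‖ * (L n * q n ^ (-τ)) with hudef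
  have hcpow_exp : ∀ (n : ℕ) (w : ℂ), (q n : ℂ) ^ (-w) = Complex.exp (-w * (L n : ℂ)) := by
    intro n w
    have hne : (q n : ℂ) ≠ 0 := Complex.ofReal_ne_zero.mpr (hqpos n).ne'
    rw [Complex.cpow_def_of_ne_zero hne, ← Complex.ofReal_log (hqpos n).le, mul_comm]
  have hterm_hasDeriv : ∀ (n : ℕ) (w : ℂ),
      HasDerivAt (fun w => c n * Complex.exp (-w * (L n : ℂ))) (d n w) w := by
    intro n w
    have h1 : HasDerivAt (fun w : ℂ => -w * (L n : ℂ)) (-(L n : ℂ)) w := by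
      simpa using ((hasDerivAt_id w).neg.mul_const ((L n : ℂ)))
    exact h1.cexp.const_mul (c n)
  have hre_neg : ∀ (n : ℕ) (w : ℂ), (-w * (L n : ℂ)).re = -w.re * L n := by
    intro n w
    simp [Complex.mul_re]
  have hnorm_d : ∀ (n : ℕ) (w : ℂ), ‖d n w‖ = ‖c n‖ * Real.exp (-w.re * L n) * L n := by
    intro n w
    rw [hddef]
    simp only [norm_mul, Complex.norm_exp, hre_neg, norm_neg]
    rw [Complex.norm_real, Real.norm_eq_abs, abs_of_pos (hlogpos n), mul_assoc]
  have hexp_rpow : ∀ (n : ℕ) (y : ℝ), Real.exp (y * L n) = q n ^ y := by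
    intro n y
    rw [Real.rpow_def_of_pos (hqpos n), mul_comm]
  have hu_sum : Summable u := by
    refine Summable.of_nonneg_of_le (fun n => mul_nonneg (norm_nonneg _)
      (mul_nonneg (hlogpos n).le (Real.rpow_nonneg (hqpos n).le _))) (fun n => ?_)
      (hconv 1 one_pos)
    have h1 : L n ≤ q n := (Real.log_le_sub_one_of_pos (hqpos n)).trans (by linarith)
    have h2 : L n * q n ^ (-τ) ≤ q n * q n ^ (-τ) :=
      mul_le_mul_of_nonneg_right h1 (Real.rpow_nonneg (hqpos n).le _)
    have h3 : q n * q n ^ (-τ) = q n ^ (-(σ+1)) := by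
      nth_rewrite 1 [← Real.rpow_one (q n)]
      rw [← Real.rpow_add (hqpos n)]
      norm_num [hτdef]
      ring_nf
    rw [hudef]
    calc ‖c n‖ * (L n * q n ^ (-τ)) ≤ ‖c n‖ * (q n * q n ^ (-τ)) :=
          mul_le_mul_of_nonneg_left h2 (norm_nonneg _)
      _ = ‖c n‖ * q n ^ (-(σ+1)) := by rw [h3]
  set H : Set ℂ := {w : ℂ | τ < w.re} with hHdef
  have hHopen : IsOpen H := isOpen_lt continuous_const Complex.continuous_re
  have hHpre : IsPreconnected H := (convex_halfSpace_re_gt τ).isPreconnected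
  have hd_bound : ∀ (n : ℕ) (w : ℂ), w ∈ H → ‖d n w‖ ≤ u n := by
    intro n w hw
    rw [hnorm_d]
    have h1 : Real.exp (-w.re * L n) ≤ Real.exp (-τ * L n) :=
      Real.exp_le_exp.2 (mul_le_mul_of_nonneg_right (neg_le_neg (le_of_lt hw)) (hlogpos n).le)
    have h2 : Real.exp (-τ * L n) = q n ^ (-τ) := hexp_rpow n (-τ)
    have h3 : Real.exp (-w.re * L n) ≤ q n ^ (-τ) := by rw [← h2]; exact h1
    show ‖c n‖ * Real.exp (-w.re * L n) * L n ≤ ‖c n‖ * (L n * q n ^ (-τ))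
    have h4 := mul_le_mul_of_nonneg_left h3 (norm_nonneg (c n))
    have h5 := mul_le_mul_of_nonneg_right h4 (hlogpos n).le
    calc ‖c n‖ * Real.exp (-w.re * L n) * L n ≤ ‖c n‖ * q n ^ (-τ) * L n := h5
      _ = ‖c n‖ * (L n * q n ^ (-τ)) := by ring
  have hw₀mem : ((τ + 1 : ℝ) : ℂ) ∈ H := by simp [hHdef]
  have hg0 : Summable (fun n => c n * Complex.exp (-((τ + 1 : ℝ) : ℂ) * (L n : ℂ))) := by
    apply Summable.of_norm
    refine Summable.of_nonneg_of_le (fun n => norm_nonneg _) (fun n => ?_) (hconv 1 one_pos)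
    have h1 : ‖c n * Complex.exp (-((τ + 1 : ℝ) : ℂ) * (L n : ℂ))‖
        = ‖c n‖ * Real.exp (-(τ + 1) * L n) := by
      simp only [norm_mul, Complex.norm_exp, hre_neg]
      simp
    rw [h1, hexp_rpow n (-(τ+1))]
    refine mul_le_mul_of_nonneg_left ?_ (norm_nonneg _)
    exact Real.rpow_le_rpow_of_exponent_le (hq1n n).le (by rw [hτdef]; linarith)
  have hgderiv : ∀ w ∈ H, HasDerivAt g (G w) w := by
    intro w hw
    exact hasDerivAt_tsum_of_isPreconnected hu_sum hHopen hHpre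
      (fun n y _ => hterm_hasDeriv n y) (fun n y hy => hd_bound n y hy) hw₀mem hg0 hw
  have hGbound : ∀ w : ℂ, τ ≤ w.re → ‖G w‖ ≤ (∑' n, u n) * Real.exp (-(w.re - τ) * a) := by
    intro w hw
    set K : ℝ := Real.exp (-(w.re - τ) * a) with hKdef
    have hterm : ∀ n, ‖d n w‖ ≤ u n * K := by
      intro n
      rw [hnorm_d]
      have e1 : Real.exp (-w.re * L n)
          = Real.exp (-τ * L n) * Real.exp (-(w.re - τ) * L n) := by
        rw [← Real.exp_add]; ring_nf
      have e2 : Real.exp (-(w.re - τ) * L n) ≤ K := by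
        rw [hKdef]
        apply Real.exp_le_exp.2
        have : a ≤ L n := by
          rw [hadef, hLdef]
          exact Real.log_le_log (hqpos 0) (hq.monotone (Nat.zero_le n))
        nlinarith
      have e3 : Real.exp (-τ * L n) = q n ^ (-τ) := hexp_rpow n (-τ)
      rw [e1, e3]
      show ‖c n‖ * (q n ^ (-τ) * Real.exp (-(w.re - τ) * L n)) * L n
          ≤ ‖c n‖ * (L n * q n ^ (-τ)) * K
      calc ‖c n‖ * (q n ^ (-τ) * Real.exp (-(w.re - τ) * L n)) * L n
          = (‖c n‖ * (L n * q n ^ (-τ))) * Real.exp (-(w.re - τ) * L n) := by ring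
        _ ≤ (‖c n‖ * (L n * q n ^ (-τ))) * K :=
            mul_le_mul_of_nonneg_left e2 (mul_nonneg (norm_nonneg _)
              (mul_nonneg (hlogpos n).le (Real.rpow_nonneg (hqpos n).le _)))
        _ = ‖c n‖ * (L n * q n ^ (-τ)) * K := by ring
    have hsum2 : Summable (fun n => u n * K) := hu_sum.mul_right K
    have hsum1 : Summable (fun n => ‖d n w‖) :=
      Summable.of_nonneg_of_le (fun n => norm_nonneg _) hterm hsum2
    calc ‖G w‖ ≤ ∑' n, ‖d n w‖ := norm_tsum_le_tsum_norm hsum1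
      _ ≤ ∑' n, u n * K := hsum1.tsum_le_tsum hterm hsum2
      _ = (∑' n, u n) * K := tsum_mul_right
  have hrep' : ∀ w : ℂ, σ < w.re → f w = Complex.exp (g w) := by
    intro w hw
    rw [hrep w hw, hgdef]
    congr 1
    exact tsum_congr fun n => by rw [hcpow_exp]
  have hFeq : ∀ t : ℝ, τ - z.re < t → F t = G (z + t) := by
    intro t htt
    set w : ℂ := z + t with hwdef
    have hwre : w.re = z.re + t := by simp [hwdef]
    have hwH : w ∈ H := by rw [hHdef]; simp only [Set.mem_setOf_eq, hwre]; linarith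
    have hσ : σ < w.re := by
      rw [hτdef] at htt
      rw [hwre]
      linarith
    have hfeq : f =ᶠ[𝓝 w] fun w' => Complex.exp (g w') := by
      have hopen : IsOpen {w' : ℂ | σ < w'.re} := isOpen_lt continuous_const Complex.continuous_re
      exact eventually_of_mem (hopen.mem_nhds hσ) fun y hy => hrep' y hy
    have hder : HasDerivAt (fun w' => Complex.exp (g w')) (Complex.exp (g w) * G w) w :=
      (hgderiv w hwH).cexp
    show logDeriv f w = G w
    rw [logDeriv_apply, hfeq.deriv_eq, hfeq.self_of_nhds, hder.deriv]
    show Complex.exp (g w) * G w / Complex.exp (g w) = G w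
    rw [mul_comm]
    exact mul_div_cancel_right₀ (G w) (Complex.exp_ne_zero _)
  have hf_top : F =O[atTop] fun t : ℝ => Real.exp (-a * t) := by
    rw [Asymptotics.isBigO_iff]
    refine ⟨(∑' n, u n) * Real.exp ((τ - z.re) * a), ?_⟩
    filter_upwards [eventually_ge_atTop (τ - z.re + 1)] with t ht
    have h1 : F t = G (z + t) := hFeq t (by linarith)
    have h2 : τ ≤ (z + (t:ℂ)).re := by simp; linarith
    have h3 := hGbound (z + t) h2
    have h4 : ((z + (t:ℂ)).re - τ) = t - (τ - z.re) := by simp; ring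
    rw [h1]
    rw [h4] at h3
    have h5 : Real.exp (-(t - (τ - z.re)) * a)
        = Real.exp ((τ - z.re) * a) * Real.exp (-a * t) := by
      rw [← Real.exp_add]; ring_nf
    have h6 : ‖Real.exp (-a * t)‖ = Real.exp (-a * t) := by
      rw [Real.norm_eq_abs, abs_of_pos (Real.exp_pos _)]
    rw [h6]
    calc ‖G (z + (t:ℂ))‖ ≤ (∑' n, u n) * (Real.exp ((τ - z.re) * a) * Real.exp (-a * t)) := by
          rw [← h5]; exact h3
      _ = (∑' n, u n) * Real.exp ((τ - z.re) * a) * Real.exp (-a * t) := by ring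
  -- Step 6: assemble via the Mellin transform machinery
  have hkey : ∀ s : ℂ, (fun t : ℝ => logDeriv f (z + t) * (t : ℂ) ^ (-s))
      = fun t : ℝ => (t : ℂ) ^ ((1 - s) - 1) • F t := by
    intro s
    funext t
    rw [show (1:ℂ) - s - 1 = -s by ring, smul_eq_mul, mul_comm]
  constructor
  · intro s hs
    have hsb : (0:ℝ) < (1 - s).re := by
      simp only [Complex.sub_re, Complex.one_re]
      linarith
    have h := mellinConvergent_of_isBigO_rpow_exp (s := 1 - s) ha hfc hf_top hf_bot
      (by simpa using hsb)
    rw [hkey s]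
    exact h
  · have hfun : (fun s : ℂ => ∫ t in Set.Ioi (0:ℝ), logDeriv f (z + t) * (t : ℂ) ^ (-s))
        = fun s : ℂ => mellin F (1 - s) := by
      funext s
      rw [mellin]
      congr 1
      exact hkey s
    rw [hfun]
    intro s hs
    have hs' : s.re < 1 := hs
    have h1 : DifferentiableAt ℂ (mellin F) (1 - s) := by
      apply mellin_differentiableAt_of_isBigO_rpow_exp ha hfc hf_top hf_bot
      simp only [Complex.sub_re, Complex.one_re]
      linarith
    have h2 : DifferentiableAt ℂ (fun s : ℂ => mellin F (1 - s)) s :=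
      h1.comp s ((differentiable_const (1:ℂ)).sub differentiable_id).differentiableAt
    exact h2.differentiableWithinAt
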